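/- Let V and V' be two multisets, each consisting of ℓ vectors in ℝⁿ. If occ_V(C,a) = occ_{V'}(C,a) for every subset C ⊆ [n] with |C| ≤ ⌊log₂ ℓ⌋ + 1 and every binary string a ∈ {0,1}^{|C|}, then the multisets of supports {supp(v) : v ∈ V} and {supp(v') : v' ∈ V'} are equal (as multisets of subsets of [n]). In other words, the values occ(C,a) over all sets C of size at most ⌊log₂ ℓ⌋ + 1 uniquely determine the supports of all ℓ vectors. -/

import Mathlib

open Finset


/-- `occ_U(C, a)`: the number of vectors `u` in the multiset `U` (with multiplicity)
whose support indicator restricted to the coordinates in `C` equals the binary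
string `a` (i.e. for each `i ∈ C`, `u i ≠ 0` exactly when the bit `a i` is `1`). -/
noncomputable def occ {n ℓ : ℕ} (U : Fin ℓ → Fin n → ℝ) (C : Finset (Fin n))
    (a : Fin n → Bool) : ℕ :=
  (Finset.univ.filter fun j : Fin ℓ => ∀ i ∈ C, (U j i ≠ 0 ↔ a i = true)).card

section Aux
variable {n : ℕ}

private lemma decide_eq_bool_iff (P : Prop) [Decidable P] (b : Bool) :
    (decide P = b) ↔ (P ↔ b = true) := by cases b <;> simp

private lemma eq_zero_of_nonpos' (d : (Fin n → Bool) → ℤ)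
    (hsum : ∑ t, d t = 0) (hnp : ∀ t, d t ≤ 0) : d = 0 := by
  have := (Finset.sum_eq_zero_iff_of_nonpos (fun t _ => hnp t)).mp hsum
  funext t
  exact this t (mem_univ t)

private lemma key : ∀ (M : ℕ) (d : (Fin n → Bool) → ℤ), d ≠ 0 →
    (∑ t, d t = 0) → (∑ t, (d t).toNat ≤ M) →
    ∃ (C : Finset (Fin n)) (a : Fin n → Bool), C.card ≤ Nat.log 2 M + 1 ∧
      ∑ t ∈ univ.filter (fun t : Fin n → Bool => ∀ i ∈ C, t i = a i), d t ≠ 0 := by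
  intro M
  induction M using Nat.strong_induction_on with
  | _ M IH =>
  intro d hd hsum hpos
  -- find a positive and a negative value
  obtain ⟨t₁, ht₁⟩ : ∃ t, 0 < d t := by
    by_contra hcon
    push_neg at hcon
    exact hd (eq_zero_of_nonpos' d hsum hcon)
  obtain ⟨t₂, ht₂⟩ : ∃ t, d t < 0 := by
    by_contra hcon
    push_neg at hcon
    have := (Finset.sum_eq_zero_iff_of_nonneg (fun t _ => hcon t)).mp hsum
    exact hd (funext fun t => this t (mem_univ t))
  have ht12 : t₁ ≠ t₂ := by intro hEq; rw [hEq] at ht₁; omega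
  obtain ⟨i, hi⟩ := Function.ne_iff.mp ht12
  by_cases hS : ∃ b : Bool, (∑ t ∈ univ.filter (fun t : Fin n → Bool => t i = b), d t) ≠ 0
  · obtain ⟨b, hb⟩ := hS
    refine ⟨{i}, fun _ => b, by simp, ?_⟩
    have hflt : univ.filter (fun t : Fin n → Bool => ∀ i' ∈ ({i} : Finset (Fin n)), t i' = b)
        = univ.filter (fun t : Fin n → Bool => t i = b) := by
      ext t; simp
    simpa [hflt] using hb
  · push_neg at hS
    set db : Bool → (Fin n → Bool) → ℤ := fun b t => if t i = b then d t else 0 with hdb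
    have hdbsum : ∀ b, ∑ t, db b t = 0 := by
      intro b
      rw [show (∑ t, db b t) = ∑ t ∈ univ.filter (fun t : Fin n → Bool => t i = b), d t from
        (Finset.sum_filter _ _).symm]
      exact hS b
    have hdb0 : ∀ b, db b ≠ 0 := by
      intro b h0
      have h1 := congrFun h0 t₁
      have h2 := congrFun h0 t₂
      simp only [hdb, Pi.zero_apply] at h1 h2
      by_cases hb1 : t₁ i = b
      · rw [if_pos hb1] at h1; omega
      · have hb2 : t₂ i = b := by
          cases b <;> cases hB1 : t₁ i <;> cases hB2 : t₂ i <;> simp_all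
        rw [if_pos hb2] at h2; omega
    set P : Bool → ℕ := fun b => ∑ t, (db b t).toNat with hP
    have hPsum : P false + P true ≤ M := by
      calc P false + P true = ∑ t, ((db false t).toNat + (db true t).toNat) := by
            rw [Finset.sum_add_distrib]
        _ = ∑ t, (d t).toNat := by
            apply Finset.sum_congr rfl
            intro t _
            by_cases ht : t i = true <;> simp [hdb, ht]
        _ ≤ M := hpos
    obtain ⟨b, hbmin⟩ : ∃ b, P b + P b ≤ M := by
      rcases le_total (P false) (P true) with hle | hle
      · exact ⟨false, by omega⟩
      · exact ⟨true, by omega⟩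
    have hPb1 : 1 ≤ P b := by
      by_contra hcon
      have hz : ∀ t, db b t ≤ 0 := by
        intro t
        have : (db b t).toNat = 0 := by
          have := Finset.sum_eq_zero_iff.mp (by omega : P b = 0)
          exact this t (mem_univ t)
        omega
      exact hdb0 b (eq_zero_of_nonpos' (db b) (hdbsum b) hz)
    have hM2 : 2 ≤ M := by omega
    have hlt : M / 2 < M := Nat.div_lt_self (by omega) (by norm_num)
    obtain ⟨C', a', hc', hs'⟩ := IH (M / 2) hlt (db b) (hdb0 b) (hdbsum b)
      (by have hh : (∑ t, (db b t).toNat) = P b := rfl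
          rw [Nat.le_div_iff_mul_le (by norm_num)]; omega)
    have hlog : Nat.log 2 (M / 2) + 1 ≤ Nat.log 2 M := by
      have h1 := Nat.log_div_base 2 M
      have h2 : 0 < Nat.log 2 M := Nat.log_pos (by norm_num) hM2
      omega
    by_cases hiC : i ∈ C'
    · have hai : a' i = b := by
        by_contra hne'
        apply hs'
        apply Finset.sum_eq_zero
        intro t ht
        simp only [mem_filter] at ht
        have hti := ht.2 i hiC
        simp only [hdb]
        rw [if_neg (by rw [hti]; exact hne')]
      refine ⟨C', a', by omega, ?_⟩
      have hEq : (∑ t ∈ univ.filter (fun t : Fin n → Bool => ∀ i' ∈ C', t i' = a' i'), d t)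
          = ∑ t ∈ univ.filter (fun t : Fin n → Bool => ∀ i' ∈ C', t i' = a' i'), db b t := by
        apply Finset.sum_congr rfl
        intro t ht
        simp only [mem_filter] at ht
        have hti := ht.2 i hiC
        simp only [hdb]
        rw [if_pos (by rw [hti, hai])]
      rw [hEq]
      exact hs'
    · refine ⟨insert i C', Function.update a' i b, ?_, ?_⟩
      · calc (insert i C').card ≤ C'.card + 1 := card_insert_le _ _
          _ ≤ Nat.log 2 M + 1 := by omega
      · have hset : univ.filter
            (fun t : Fin n → Bool => ∀ i' ∈ insert i C', t i' = Function.update a' i b i')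
            = (univ.filter (fun t : Fin n → Bool => ∀ i' ∈ C', t i' = a' i')).filter
                (fun t => t i = b) := by
          rw [Finset.filter_filter]
          ext t
          simp only [mem_filter, mem_univ, true_and, mem_insert]
          constructor
          · intro hh
            refine ⟨fun i' hi' => ?_, ?_⟩
            · have := hh i' (Or.inr hi')
              rwa [Function.update_of_ne (by rintro rfl; exact hiC hi')] at this
            · have := hh i (Or.inl rfl)
              rwa [Function.update_self] at this
          · rintro ⟨h1, h2⟩ i' hi'
            rcases hi' with rfl | hi'
            · rwa [Function.update_self]
            · rw [Function.update_of_ne (by rintro rfl; exact hiC hi')]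
              exact h1 i' hi'
        rw [hset, Finset.sum_filter]
        exact hs'

end Aux


section Main
variable {n ℓ : ℕ}

private noncomputable def pat (V : Fin ℓ → Fin n → ℝ) (j : Fin ℓ) : Fin n → Bool :=
  fun i => decide (V j i ≠ 0)

private noncomputable def cnt (V : Fin ℓ → Fin n → ℝ) (t : Fin n → Bool) : ℕ :=
  (univ.filter fun j => pat V j = t).card

private lemma cnt_sum (V : Fin ℓ → Fin n → ℝ) : ∑ t, cnt V t = ℓ := by
  have := Finset.card_eq_sum_card_fiberwise
    (f := pat V) (s := (univ : Finset (Fin ℓ))) (t := univ) (fun x _ => mem_univ _)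
  simpa [cnt] using this.symm

private lemma occ_eq_sum (V : Fin ℓ → Fin n → ℝ) (C : Finset (Fin n)) (a : Fin n → Bool) :
    occ V C a = ∑ t ∈ univ.filter (fun t : Fin n → Bool => ∀ i ∈ C, t i = a i), cnt V t := by
  have hs : (univ.filter fun j : Fin ℓ => ∀ i ∈ C, (V j i ≠ 0 ↔ a i = true))
      = univ.filter (fun j => ∀ i ∈ C, pat V j i = a i) := by
    ext j
    simp only [mem_filter, mem_univ, true_and, pat, decide_eq_bool_iff]
  rw [occ, hs]
  rw [Finset.card_eq_sum_card_fiberwise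
    (f := pat V) (t := univ.filter (fun t : Fin n → Bool => ∀ i ∈ C, t i = a i))
    (fun j hj => by
      simp only [mem_coe, mem_filter, mem_univ, true_and] at hj ⊢
      exact hj)]
  apply Finset.sum_congr rfl
  intro t ht
  simp only [mem_filter, mem_univ, true_and] at ht
  rw [cnt]
  congr 1
  ext j
  simp only [mem_filter, mem_univ, true_and]
  constructor
  · rintro ⟨h1, h2⟩; exact h2
  · intro h2
    refine ⟨fun i hi => ?_, h2⟩
    rw [h2]; exact ht i hi

end Main


/-- If two multisets `U, U'` of `ℓ` vectors in `ℝⁿ` have the same values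
`occ(C, a)` for every subset `C ⊆ [n]` with `|C| ≤ ⌊log₂ ℓ⌋ + 1` and every binary
string `a`, then the multisets of supports of `U` and `U'` coincide. -/
theorem occ_determines_supports (n ℓ : ℕ) (U U' : Fin ℓ → Fin n → ℝ)
    (h : ∀ C : Finset (Fin n), C.card ≤ Nat.log 2 ℓ + 1 →
      ∀ a : Fin n → Bool, occ U C a = occ U' C a) :
    Multiset.map (fun j : Fin ℓ => Finset.univ.filter fun i => U j i ≠ 0)
        (Finset.univ : Finset (Fin ℓ)).val =
      Multiset.map (fun j : Fin ℓ => Finset.univ.filter fun i => U' j i ≠ 0)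
        (Finset.univ : Finset (Fin ℓ)).val := by
  classical
  set d : (Fin n → Bool) → ℤ := fun t => (cnt U t : ℤ) - (cnt U' t : ℤ) with hd_def
  have hsum : ∑ t, d t = 0 := by
    simp only [hd_def, Finset.sum_sub_distrib]
    rw [← Nat.cast_sum, ← Nat.cast_sum, cnt_sum, cnt_sum, sub_self]
  have hpos : ∑ t, (d t).toNat ≤ ℓ := by
    calc ∑ t, (d t).toNat = ∑ t, (cnt U t - cnt U' t) := by
          apply Finset.sum_congr rfl
          intro t _
          simp only [hd_def]
          rw [Int.toNat_sub]
      _ ≤ ∑ t, cnt U t := Finset.sum_le_sum (fun t _ => Nat.sub_le _ _)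
      _ = ℓ := cnt_sum U
  have hd0 : d = 0 := by
    by_contra hd0
    obtain ⟨C, a, hcard, hne⟩ := key ℓ d hd0 hsum hpos
    apply hne
    have hocc := h C hcard a
    simp only [hd_def, Finset.sum_sub_distrib]
    rw [← Nat.cast_sum, ← Nat.cast_sum, ← occ_eq_sum, ← occ_eq_sum, hocc, sub_self]
  have hcnt : ∀ t, cnt U t = cnt U' t := by
    intro t
    have := congrFun hd0 t
    simp only [hd_def, Pi.zero_apply, sub_eq_zero] at this
    exact_mod_cast this
  have hmap : ∀ V : Fin ℓ → Fin n → ℝ,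
      Multiset.map (fun j : Fin ℓ => Finset.univ.filter fun i => V j i ≠ 0)
          (Finset.univ : Finset (Fin ℓ)).val
        = Multiset.map (fun t : Fin n → Bool => Finset.univ.filter fun i => t i = true)
            (Multiset.map (pat V) (Finset.univ : Finset (Fin ℓ)).val) := by
    intro V
    rw [Multiset.map_map]
    apply Multiset.map_congr rfl
    intro j _
    ext i
    simp [pat]
  rw [hmap U, hmap U']
  congr 1
  refine Multiset.ext.mpr fun t => ?_
  rw [Multiset.count_map, Multiset.count_map]
  have hcount : ∀ V : Fin ℓ → Fin n → ℝ,
      Multiset.card (Multiset.filter (fun j => t = pat V j) (Finset.univ : Finset (Fin ℓ)).val)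
        = cnt V t := by
    intro V
    rw [cnt]
    rw [show (univ.filter fun j => pat V j = t).card
        = Multiset.card ((univ : Finset (Fin ℓ)).val.filter (fun j => pat V j = t)) from rfl]
    congr 1
    apply Multiset.filter_congr
    intro j _
    exact ⟨Eq.symm, Eq.symm⟩
  rw [hcount U, hcount U', hcnt t]
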